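/- arXiv:2007.09527 — 2 statements merged into one kernel-verified Lean document; each statement's English description precedes it below -/
import Mathlib

section
/- MILP encoding completeness (backward direction, single neuron): let x : Fin n → ℝ with x ≥ 0 pointwise, and let y, q be reals with q ∈ {0,1} satisfying: (1) ∑ᵢ Wˡᵢ·xᵢ + bˡ ≤ y; (2) 0 ≤ y; (3) ∑ᵢ Wᵘᵢ·xᵢ + bᵘ + M·q ≥ y; (4) M·(1−q) ≥ y. Then there exist w : Fin n → ℝ with Wˡ ≤ w ≤ Wᵘ pointwise and b with bˡ ≤ b ≤ bᵘ such that y = σ(∑ᵢ wᵢ·xᵢ + b). -/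
theorem milp_encoding_complete (n : ℕ) (Wl Wu x : Fin n → ℝ) (bl bu M y q : ℝ)
    (hW : ∀ i, Wl i ≤ Wu i) (hb : bl ≤ bu)
    (hx : ∀ i, 0 ≤ x i)
    (hq : q = 0 ∨ q = 1)
    (h1 : ∑ i, Wl i * x i + bl ≤ y)
    (h2 : 0 ≤ y)
    (h3 : y ≤ ∑ i, Wu i * x i + bu + M * q)
    (h4 : y ≤ M * (1 - q)) :
    ∃ (w : Fin n → ℝ) (b : ℝ),
      (∀ i, Wl i ≤ w i) ∧ (∀ i, w i ≤ Wu i) ∧ bl ≤ b ∧ b ≤ bu ∧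
      y = max 0 (∑ i, w i * x i + b) := by
  rcases hq with hq | hq
  · -- q = 0 : y between lower and upper affine bounds
    subst hq
    set L := ∑ i, Wl i * x i + bl with hL
    set U := ∑ i, Wu i * x i + bu with hU
    have hyU : y ≤ U := by simpa using h3
    have hLU : L ≤ U := le_trans h1 hyU
    by_cases hEq : U = L
    · refine ⟨Wl, bl, fun i => le_refl _, hW, le_refl _, hb, ?_⟩
      have : y = L := le_antisymm (hEq ▸ hyU) h1
      rw [← hL, ← this, max_eq_right h2]
    · have hlt : L < U := lt_of_le_of_ne hLU (Ne.symm hEq)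
      set t := (y - L) / (U - L) with ht
      have hden : 0 < U - L := sub_pos.mpr hlt
      have ht0 : 0 ≤ t := div_nonneg (sub_nonneg.mpr h1) hden.le
      have ht1 : t ≤ 1 := by
        rw [ht, div_le_one hden]; linarith
      refine ⟨fun i => Wl i + t * (Wu i - Wl i), bl + t * (bu - bl), ?_, ?_, ?_, ?_, ?_⟩
      · intro i; simp only; nlinarith [hW i]
      · intro i; simp only; nlinarith [hW i]
      · nlinarith
      · nlinarith
      · have hsum : ∑ i, (Wl i + t * (Wu i - Wl i)) * x i
            = ∑ i, Wl i * x i + t * (∑ i, Wu i * x i - ∑ i, Wl i * x i) := by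
          rw [← Finset.sum_sub_distrib, Finset.mul_sum, ← Finset.sum_add_distrib]
          exact Finset.sum_congr rfl fun i _ => by ring
        have htU : t * (U - L) = y - L := div_mul_cancel₀ _ hden.ne'
        have : ∑ i, (Wl i + t * (Wu i - Wl i)) * x i + (bl + t * (bu - bl)) = y := by
          rw [hsum]; have := htU; rw [hU, hL] at this; linarith
        rw [this, max_eq_right h2]
  · -- q = 1 : y = 0
    subst hq
    have hy0 : y = 0 := le_antisymm (by simpa using h4) h2
    refine ⟨Wl, bl, fun i => le_refl _, hW, le_refl _, hb, ?_⟩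
    rw [hy0, max_eq_left (by linarith)]
end

section
/- Single-layer left-abstraction soundness: let S be a finite nonempty index set partitioned into nonempty blocks P₁,...,Pₘ, let v : S → ℝ be nonnegative, let w : S → ℝ be edge weights and b a bias, and set y = σ(∑_{s∈S} w(s)·v(s) + b). Define for each block Pⱼ the abstract value v̂(j) = (∑_{s∈Pⱼ} v(s))/|Pⱼ|. Then there exist abstract weights ŵ(j) with |Pⱼ|·min_{s∈Pⱼ} w(s) ≤ ŵ(j) ≤ |Pⱼ|·max_{s∈Pⱼ} w(s) for each j, such that y = σ(∑ⱼ ŵ(j)·v̂(j) + b). -/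
theorem left_abstraction_sound (S : Type*) [Fintype S] (m : ℕ)
    (P : Fin m → Finset S)
    (hPne : ∀ j, (P j).Nonempty)
    (hdisj : ∀ j j', j ≠ j' → Disjoint (P j) (P j'))
    (hcover : ∀ s : S, ∃ j, s ∈ P j)
    (v w : S → ℝ) (b : ℝ) (hv : ∀ s, 0 ≤ v s) :
    ∃ wa : Fin m → ℝ,
      (∀ j, ((P j).card : ℝ) * (P j).inf' (hPne j) w ≤ wa j ∧
            wa j ≤ ((P j).card : ℝ) * (P j).sup' (hPne j) w) ∧
      max 0 (∑ s, w s * v s + b)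
        = max 0 (∑ j, wa j * ((∑ s ∈ P j, v s) / (P j).card) + b) := by
  classical
  have hcard : ∀ j, (0:ℝ) < (P j).card := fun j => by
    exact_mod_cast Finset.card_pos.mpr (hPne j)
  have hvsum : ∀ j, 0 ≤ ∑ s ∈ P j, v s := fun j =>
    Finset.sum_nonneg fun s _ => hv s
  refine ⟨fun j => if h : (∑ s ∈ P j, v s) = 0 then
      ((P j).card : ℝ) * (P j).inf' (hPne j) w
    else ((P j).card : ℝ) * (∑ s ∈ P j, w s * v s) / (∑ s ∈ P j, v s), ?_, ?_⟩
  · intro j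
    by_cases h : (∑ s ∈ P j, v s) = 0
    · simp only [h, dif_pos]
      refine ⟨le_refl _, ?_⟩
      obtain ⟨x, hx⟩ := hPne j
      have : (P j).inf' (hPne j) w ≤ (P j).sup' (hPne j) w :=
        le_trans (Finset.inf'_le _ hx) (Finset.le_sup' _ hx)
      exact mul_le_mul_of_nonneg_left this (hcard j).le
    · simp only [h, dif_neg, not_false_iff]
      have hpos : 0 < ∑ s ∈ P j, v s := lt_of_le_of_ne (hvsum j) (Ne.symm h)
      have hlow : (P j).inf' (hPne j) w * (∑ s ∈ P j, v s) ≤ ∑ s ∈ P j, w s * v s := by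
        rw [Finset.mul_sum]
        exact Finset.sum_le_sum fun s hs =>
          mul_le_mul_of_nonneg_right (Finset.inf'_le _ hs) (hv s)
      have hhigh : (∑ s ∈ P j, w s * v s) ≤ (P j).sup' (hPne j) w * (∑ s ∈ P j, v s) := by
        rw [Finset.mul_sum]
        exact Finset.sum_le_sum fun s hs =>
          mul_le_mul_of_nonneg_right (Finset.le_sup' _ hs) (hv s)
      constructor
      · have hlow' : (P j).inf' (hPne j) w ≤ (∑ s ∈ P j, w s * v s) / (∑ s ∈ P j, v s) :=
          (le_div_iff₀ hpos).mpr hlow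
        calc ((P j).card : ℝ) * (P j).inf' (hPne j) w
            ≤ ((P j).card : ℝ) * ((∑ s ∈ P j, w s * v s) / (∑ s ∈ P j, v s)) :=
              mul_le_mul_of_nonneg_left hlow' (hcard j).le
          _ = _ := by ring
      · have hhigh' : (∑ s ∈ P j, w s * v s) / (∑ s ∈ P j, v s) ≤ (P j).sup' (hPne j) w :=
          (div_le_iff₀ hpos).mpr hhigh
        calc (((P j).card : ℝ) * ∑ s ∈ P j, w s * v s) / (∑ s ∈ P j, v s)
            = ((P j).card : ℝ) * ((∑ s ∈ P j, w s * v s) / (∑ s ∈ P j, v s)) := by ring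
          _ ≤ _ := mul_le_mul_of_nonneg_left hhigh' (hcard j).le
  · congr 1
    congr 1
    have hbiUnion : Finset.univ.biUnion P = Finset.univ := by
      ext s; simp [hcover s]
    have hsum : ∑ s, w s * v s = ∑ j, ∑ s ∈ P j, w s * v s := by
      rw [← hbiUnion, Finset.sum_biUnion]
      intro j _ j' _ hjj'
      exact hdisj j j' hjj'
    rw [hsum]
    apply Finset.sum_congr rfl
    intro j _
    by_cases h : (∑ s ∈ P j, v s) = 0
    · simp only [h, dif_pos]
      have : ∀ s ∈ P j, v s = 0 := fun s hs =>
        (Finset.sum_eq_zero_iff_of_nonneg fun s _ => hv s).mp h s hs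
      rw [Finset.sum_congr rfl fun s hs => by rw [this s hs, mul_zero]]
      simp
    · simp only [h, dif_neg, not_false_iff]
      field_simp
end
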